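/- arXiv:1710.02819 — 3 statements merged into one kernel-verified Lean document; each statement's English description precedes it below -/
import Mathlib

section
/- For every positive integer N, the N-th elementary symmetric polynomial equals e_N = Σ_{λ ⊢ N} (-1)^{N - ℓ(λ)} p_λ / z_λ, where the sum runs over all integer partitions λ of N, ℓ(λ) is the number of parts of λ, p_λ = Π_m p_m^{a_m} with a_m the number of parts of λ equal to m, and z_λ = Π_m m^{a_m} a_m!. (This expresses the S-function (1^N), i.e. the Fermi canonical partition function, as a signed sum over integer partitions of products of single-particle partition functions.) -/
open MvPolynomial

/-- The symmetry factor `z_λ = ∏_m m^{a_m} a_m!` of an integer partition `λ`,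
where `a_m` is the number of parts of `λ` equal to `m`. -/
def zPart {N : ℕ} (μ : Nat.Partition N) : ℕ :=
  ∏ m ∈ μ.parts.toFinset, m ^ μ.parts.count m * (μ.parts.count m).factorial

section Aux

private lemma part_le {N : ℕ} (lam : Nat.Partition N) {j : ℕ} (hj : j ∈ lam.parts) : j ≤ N := by
  have h2 : lam.parts.sum = j + (lam.parts.erase j).sum := by
    rw [← Multiset.sum_cons, Multiset.cons_erase hj]
  have h3 := lam.parts_sum
  omega

private lemma zPart_eq_prod_range {N : ℕ} (μ : Nat.Partition N) {B : ℕ} (hB : N < B) :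
    zPart μ = ∏ m ∈ Finset.range B, m ^ μ.parts.count m * (μ.parts.count m).factorial := by
  unfold zPart
  refine Finset.prod_subset ?_ ?_
  · intro m hm
    rw [Multiset.mem_toFinset] at hm
    rw [Finset.mem_range]
    have := part_le μ hm
    omega
  · intro m _ hm
    rw [Multiset.mem_toFinset] at hm
    rw [Multiset.count_eq_zero_of_notMem hm]
    simp

private def removeP {N : ℕ} (lam : Nat.Partition N) (j : ℕ) (hj : j ∈ lam.parts) :
    Nat.Partition (N - j) where
  parts := lam.parts.erase j
  parts_pos hi := lam.parts_pos (Multiset.mem_of_mem_erase hi)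
  parts_sum := by
    have h2 : lam.parts.sum = j + (lam.parts.erase j).sum := by
      rw [← Multiset.sum_cons, Multiset.cons_erase hj]
    have h3 := lam.parts_sum
    omega

private def insertP {N i : ℕ} (hi : i < N) (μ : Nat.Partition i) : Nat.Partition N where
  parts := (N - i) ::ₘ μ.parts
  parts_pos := by
    intro k hk
    rcases Multiset.mem_cons.mp hk with h | h
    · omega
    · exact μ.parts_pos h
  parts_sum := by
    rw [Multiset.sum_cons, μ.parts_sum]
    omega

private def removeT {N : ℕ} (lam : Nat.Partition N) (j : ℕ) : Nat.Partition (N - j) :=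
  if hj : j ∈ lam.parts then removeP lam j hj else Nat.Partition.indiscrete (N - j)

private def insertT (N i : ℕ) (μ : Nat.Partition i) : Nat.Partition N :=
  if hi : i < N then insertP hi μ else Nat.Partition.indiscrete N

private lemma zPart_remove {N : ℕ} (lam : Nat.Partition N) (j : ℕ) (hj : j ∈ lam.parts) :
    zPart lam = j * lam.parts.count j * zPart (removeP lam j hj) := by
  rw [zPart_eq_prod_range lam (Nat.lt_succ_self N),
      zPart_eq_prod_range (removeP lam j hj) (show N - j < N + 1 by omega)]
  have hjr : j ∈ Finset.range (N + 1) := by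
    rw [Finset.mem_range]
    have := part_le lam hj
    omega
  rw [← Finset.mul_prod_erase _ _ hjr, ← Finset.mul_prod_erase _ _ hjr]
  have hprod : ∏ m ∈ (Finset.range (N + 1)).erase j,
      m ^ (removeP lam j hj).parts.count m * ((removeP lam j hj).parts.count m).factorial =
      ∏ m ∈ (Finset.range (N + 1)).erase j,
      m ^ lam.parts.count m * (lam.parts.count m).factorial := by
    refine Finset.prod_congr rfl fun m hm => ?_
    have hne : m ≠ j := Finset.ne_of_mem_erase hm
    have : (removeP lam j hj).parts.count m = lam.parts.count m :=
      Multiset.count_erase_of_ne hne _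
    rw [this]
  rw [hprod]
  have hc : 0 < lam.parts.count j := Multiset.count_pos.mpr hj
  obtain ⟨c, hcc⟩ : ∃ c, lam.parts.count j = c + 1 := ⟨lam.parts.count j - 1, by omega⟩
  have hcount : (removeP lam j hj).parts.count j = c := by
    show (lam.parts.erase j).count j = c
    rw [Multiset.count_erase_self]
    omega
  rw [hcount, hcc, pow_succ, Nat.factorial_succ]
  ring

private lemma zPart_pos {N : ℕ} (μ : Nat.Partition N) : 0 < zPart μ := by
  unfold zPart
  apply Finset.prod_pos
  intro m hm
  have hm' := μ.parts_pos (Multiset.mem_toFinset.mp hm)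
  positivity

private lemma card_le_of_partition {N : ℕ} (lam : Nat.Partition N) :
    Multiset.card lam.parts ≤ N := by
  have := Multiset.card_nsmul_le_sum (s := lam.parts) (a := 1) (fun x hx => lam.parts_pos hx)
  simpa [lam.parts_sum] using this

private lemma neg_one_pow_sub (a b : ℕ) (h : b ≤ a) :
    (-1 : ℚ) ^ (a - b) = (-1) ^ a * (-1) ^ b := by
  conv_rhs => rw [← Nat.sub_add_cancel h, pow_add, mul_assoc, ← pow_add]
  rw [Even.neg_one_pow ⟨b, rfl⟩, mul_one]

private lemma sign_key (N j cm : ℕ) (h1 : 0 < j) (h2 : j ≤ N) (h3 : cm ≤ N - j) :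
    (-1 : ℚ) ^ (N - (cm + 1)) = (-1) ^ (N + 1) * (-1) ^ (N - j) * (-1) ^ (N - j - cm) := by
  rw [neg_one_pow_sub N (cm + 1) (by omega), neg_one_pow_sub N j h2,
    neg_one_pow_sub (N - j) cm h3, neg_one_pow_sub N j h2, pow_succ, pow_succ]
  have hN : (-1 : ℚ) ^ N * (-1) ^ N = 1 := by
    rw [← pow_add]; exact Even.neg_one_pow ⟨N, rfl⟩
  have hJ : (-1 : ℚ) ^ j * (-1) ^ j = 1 := by
    rw [← pow_add]; exact Even.neg_one_pow ⟨j, rfl⟩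
  linear_combination ((-1 : ℚ) ^ N * (-1) ^ cm * (-1) ^ j * (-1) ^ j) * hN +
    ((-1 : ℚ) ^ N * (-1) ^ cm) * hJ

private lemma partition_heq {a b : ℕ} (h : a = b) {μ : Nat.Partition a} {ν : Nat.Partition b}
    (hp : μ.parts = ν.parts) : HEq μ ν := by
  subst h
  exact heq_of_eq (Nat.Partition.ext hp)

end Aux

section Main

variable (σ : Type*) [Fintype σ] [DecidableEq σ] (R : Type*) [CommRing R] [Algebra ℚ R]

private noncomputable def F (N : ℕ) : MvPolynomial σ R :=
  ∑ μ : Nat.Partition N,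
    ((-1 : ℚ) ^ (N - μ.parts.card) * (zPart μ : ℚ)⁻¹) • psumPart σ R μ

private lemma neg_one_pow_mul (k : ℕ) (x : MvPolynomial σ R) :
    (-1 : MvPolynomial σ R) ^ k * x = ((-1 : ℚ) ^ k) • x := by
  rw [Algebra.smul_def, map_pow, map_neg, map_one]

private lemma nat_smul (N : ℕ) (x : MvPolynomial σ R) :
    (N : ℚ) • x = (N : MvPolynomial σ R) * x := by
  rw [Algebra.smul_def, map_natCast]

private lemma psumPart_remove {N : ℕ} (lam : Nat.Partition N) (j : ℕ) (hj : j ∈ lam.parts) :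
    psumPart σ R lam = psum σ R j * psumPart σ R (removeP lam j hj) := by
  unfold psumPart
  conv_lhs => rw [← Multiset.cons_erase hj]
  rw [Multiset.map_cons, Multiset.prod_cons]
  rfl

private lemma expand_term (a b : ℕ) (q : ℚ) (P Q : MvPolynomial σ R) :
    (-1 : MvPolynomial σ R) ^ a * ((-1 : MvPolynomial σ R) ^ b * (q • P) * Q) =
      ((-1 : ℚ) ^ a * ((-1 : ℚ) ^ b * q)) • (P * Q) := by
  rw [mul_smul, mul_smul, ← neg_one_pow_mul, ← neg_one_pow_mul, mul_assoc, smul_mul_assoc]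

private lemma key (N : ℕ) (hN : 0 < N) :
    (N : ℚ) • F σ R N =
      (-1 : MvPolynomial σ R) ^ (N + 1) *
        ∑ i ∈ Finset.range N, (-1 : MvPolynomial σ R) ^ i * F σ R i * psum σ R (N - i) := by
  have hLHS : (N : ℚ) • F σ R N =
      ∑ x ∈ (Finset.univ : Finset (Nat.Partition N)).sigma (fun lam => lam.parts.toFinset),
        (((x.1.parts.count x.2 * x.2 : ℕ) : ℚ) *
          ((-1 : ℚ) ^ (N - x.1.parts.card) * (zPart x.1 : ℚ)⁻¹)) • psumPart σ R x.1 := by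
    rw [Finset.sum_sigma]
    unfold F
    rw [Finset.smul_sum]
    refine Finset.sum_congr rfl fun lam _ => ?_
    rw [smul_smul]
    have h0 : N = ∑ m ∈ lam.parts.toFinset, lam.parts.count m * m := by
      conv_lhs => rw [← lam.parts_sum, Finset.sum_multiset_count]
      simp [smul_eq_mul]
    have hNq : (N : ℚ) = ∑ m ∈ lam.parts.toFinset, ((lam.parts.count m * m : ℕ) : ℚ) := by
      rw [← Nat.cast_sum]
      exact_mod_cast congrArg (Nat.cast (R := ℚ)) h0
    rw [hNq, Finset.sum_mul, Finset.sum_smul]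
  have hRHS : (-1 : MvPolynomial σ R) ^ (N + 1) *
        ∑ i ∈ Finset.range N, (-1 : MvPolynomial σ R) ^ i * F σ R i * psum σ R (N - i) =
      ∑ y ∈ (Finset.range N).sigma (fun i => (Finset.univ : Finset (Nat.Partition i))),
        ((-1 : ℚ) ^ (N + 1) * ((-1 : ℚ) ^ y.1 *
          ((-1 : ℚ) ^ (y.1 - y.2.parts.card) * (zPart y.2 : ℚ)⁻¹))) •
          (psumPart σ R y.2 * psum σ R (N - y.1)) := by
    rw [Finset.mul_sum, Finset.sum_sigma]
    refine Finset.sum_congr rfl fun i _ => ?_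
    unfold F
    rw [Finset.mul_sum, Finset.sum_mul, Finset.mul_sum]
    exact Finset.sum_congr rfl fun μ _ => expand_term σ R _ _ _ _ _
  rw [hLHS, hRHS]
  refine Finset.sum_nbij'
    (fun x => (⟨N - x.2, removeT x.1 x.2⟩ : Σ i : ℕ, Nat.Partition i))
    (fun y => (⟨insertT N y.1 y.2, N - y.1⟩ : Σ _ : Nat.Partition N, ℕ))
    ?_ ?_ ?_ ?_ ?_
  · -- maps into target
    rintro ⟨lam, j⟩ hx
    dsimp only
    rw [Finset.mem_sigma] at hx ⊢
    have hj : j ∈ lam.parts := Multiset.mem_toFinset.mp hx.2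
    have hj0 := lam.parts_pos hj
    refine ⟨Finset.mem_range.mpr ?_, Finset.mem_univ _⟩
    show N - j < N
    omega
  · -- maps back into source
    rintro ⟨i, μ⟩ hy
    dsimp only
    rw [Finset.mem_sigma] at hy ⊢
    have hi : i < N := Finset.mem_range.mp hy.1
    refine ⟨Finset.mem_univ _, ?_⟩
    rw [Multiset.mem_toFinset]
    show N - i ∈ (insertT N i μ).parts
    unfold insertT
    rw [dif_pos hi]
    exact Multiset.mem_cons_self _ _
  · -- left inverse
    rintro ⟨lam, j⟩ hx
    dsimp only
    rw [Finset.mem_sigma] at hx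
    have hj : j ∈ lam.parts := Multiset.mem_toFinset.mp hx.2
    have hj0 := lam.parts_pos hj
    have hjN := part_le lam hj
    have h1 : N - (N - j) = j := by omega
    have hfst : insertT N (N - j) (removeT lam j) = lam := by
      unfold insertT removeT
      rw [dif_pos hj, dif_pos (show N - j < N by omega)]
      apply Nat.Partition.ext
      show (N - (N - j)) ::ₘ lam.parts.erase j = lam.parts
      rw [h1]
      exact Multiset.cons_erase hj
    exact Sigma.ext hfst (heq_of_eq h1)
  · -- right inverse
    rintro ⟨i, μ⟩ hy
    dsimp only
    rw [Finset.mem_sigma] at hy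
    have hi : i < N := Finset.mem_range.mp hy.1
    have h1 : N - (N - i) = i := by omega
    have hmem : N - i ∈ (insertT N i μ).parts := by
      unfold insertT
      rw [dif_pos hi]
      exact Multiset.mem_cons_self _ _
    refine Sigma.ext h1 (partition_heq h1 ?_)
    show (removeT (insertT N i μ) (N - i)).parts = μ.parts
    unfold removeT
    rw [dif_pos hmem]
    show ((insertT N i μ).parts).erase (N - i) = μ.parts
    unfold insertT
    rw [dif_pos hi]
    exact Multiset.erase_cons_head _ _
  · -- terms agree
    rintro ⟨lam, j⟩ hx
    dsimp only
    rw [Finset.mem_sigma] at hx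
    have hj : j ∈ lam.parts := Multiset.mem_toFinset.mp hx.2
    have hj0 := lam.parts_pos hj
    have hjN := part_le lam hj
    have h1 : N - (N - j) = j := by omega
    show _ = ((-1 : ℚ) ^ (N + 1) * ((-1 : ℚ) ^ (N - j) *
        ((-1 : ℚ) ^ ((N - j) - (removeT lam j).parts.card) * (zPart (removeT lam j) : ℚ)⁻¹))) •
        (psumPart σ R (removeT lam j) * psum σ R (N - (N - j)))
    have hrT : removeT lam j = removeP lam j hj := dif_pos hj
    rw [hrT, h1]
    set μ := removeP lam j hj with hμ
    have hcard : lam.parts.card = μ.parts.card + 1 := by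
      have h2 : μ.parts.card = lam.parts.card - 1 := by
        show (lam.parts.erase j).card = _
        exact Multiset.card_erase_of_mem hj
      have h3 : 0 < lam.parts.card := by
        rw [Multiset.card_pos]
        exact fun h => by simp [h] at hj
      omega
    have hcm : μ.parts.card ≤ N - j := card_le_of_partition μ
    have hz : (zPart lam : ℚ) = (j : ℚ) * (lam.parts.count j : ℚ) * (zPart μ : ℚ) := by
      exact_mod_cast congrArg (Nat.cast (R := ℚ)) (zPart_remove lam j hj)
    have hzμ : (zPart μ : ℚ) ≠ 0 := by
      exact_mod_cast (zPart_pos μ).ne'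
    have hjq : (j : ℚ) ≠ 0 := by exact_mod_cast hj0.ne'
    have hcq : (lam.parts.count j : ℚ) ≠ 0 := by
      exact_mod_cast (Multiset.count_pos.mpr hj).ne'
    rw [psumPart_remove σ R lam j hj, ← hμ, mul_comm (psum σ R j) (psumPart σ R μ)]
    rw [mul_comm (psumPart σ R μ) (psum σ R j)]
    congr 1
    rw [hcard, sign_key N j μ.parts.card hj0 hjN hcm, hz]
    push_cast
    field_simp



private lemma esymm_eq_F (N : ℕ) : esymm σ R N = F σ R N := by
  induction N using Nat.strong_induction_on with
  | _ N ih =>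
    rcases Nat.eq_zero_or_pos N with h0 | hN
    · subst h0
      rw [esymm_zero]
      unfold F
      have hparts : ∀ μ : Nat.Partition 0, μ.parts = 0 := by
        intro μ
        refine Multiset.eq_zero_of_forall_notMem fun a ha => ?_
        have h1 := μ.parts_pos ha
        have h2 := part_le μ ha
        omega
      rw [Finset.univ_unique, Finset.sum_singleton]
      simp [zPart, psumPart, hparts]
    · have hnewt := mul_esymm_eq_sum σ R N
      have hre : ∑ a ∈ Finset.filter (fun a => a.1 < N) (Finset.HasAntidiagonal.antidiagonal N),
          (-1 : MvPolynomial σ R) ^ a.1 * esymm σ R a.1 * psum σ R a.2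
          = ∑ i ∈ Finset.range N, (-1 : MvPolynomial σ R) ^ i * F σ R i * psum σ R (N - i) := by
        rw [Finset.sum_filter, Finset.Nat.sum_antidiagonal_eq_sum_range_succ_mk,
          Finset.sum_range_succ, if_neg (lt_irrefl N), add_zero]
        refine Finset.sum_congr rfl fun k hk => ?_
        rw [if_pos (Finset.mem_range.mp hk), ih k (Finset.mem_range.mp hk)]
      have h1 : (N : ℚ) • esymm σ R N = (N : ℚ) • F σ R N := by
        rw [nat_smul, hnewt, hre, ← key σ R N hN]
      have hne : (N : ℚ) ≠ 0 := by exact_mod_cast hN.ne'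
      calc esymm σ R N = (N : ℚ)⁻¹ • ((N : ℚ) • esymm σ R N) := by
              rw [smul_smul, inv_mul_cancel₀ hne, one_smul]
        _ = (N : ℚ)⁻¹ • ((N : ℚ) • F σ R N) := by rw [h1]
        _ = F σ R N := by rw [smul_smul, inv_mul_cancel₀ hne, one_smul]

end Main

/-- **Signed power-sum expansion of the Fermi canonical partition function.**
`e_N = ∑_{λ ⊢ N} (-1)^{N - ℓ(λ)} p_λ / z_λ`, where `ℓ(λ)` is the number of parts of `λ`,
`p_λ = ∏_m p_m^{a_m}` and `z_λ = ∏_m m^{a_m} a_m!`. -/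
theorem esymm_eq_sum_signed_psumPart_div_zPart
    (σ : Type*) [Fintype σ] [DecidableEq σ]
    (R : Type*) [CommRing R] [Algebra ℚ R] (N : ℕ) (hN : 0 < N) :
    esymm σ R N = ∑ μ : Nat.Partition N,
      ((-1 : ℚ) ^ (N - μ.parts.card) * (zPart μ : ℚ)⁻¹) • psumPart σ R μ := by
  have h := esymm_eq_F σ R N
  unfold F at h
  exact h
end

section
/- The sum of the monomial symmetric polynomials over the partitions of 4 with all parts at most 3 satisfies m_{(3,1)} + m_{(2,2)} + m_{(2,1,1)} + m_{(1,1,1,1)} = (1/24) p_1^4 + (1/4) p_1^2 p_2 + (1/8) p_2^2 + (1/3) p_1 p_3 - (3/4) p_4. (This is the canonical partition function Z_3(β,4) of an ideal Gentile gas with N = 4 particles and maximum occupation number q = 3, expressed through the single-particle partition functions Z(kβ) = p_k.) -/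
open MvPolynomial

/-- Build an integer partition of `N` from an explicit multiset of parts. -/
def part (N : ℕ) (s : Multiset ℕ)
    (h1 : ∀ i ∈ s, 0 < i := by decide) (h2 : s.sum = N := by decide) :
    Nat.Partition N :=
  ⟨s, fun hi => h1 _ hi, h2⟩

namespace GentileAux

open Finset

@[simp] lemma part_parts {N : ℕ} (s : Multiset ℕ) (h1) (h2) :
    (part N s h1 h2).parts = s := rfl

variable {σ : Type*} [DecidableEq σ]

lemma parts_ofSym' {n : ℕ} (s : Sym σ n) :
    (Nat.Partition.ofSym s).parts = s.1.dedup.map s.1.count := rfl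

lemma dedup_replicate' (a : σ) (n : ℕ) (hn : n ≠ 0) :
    (Multiset.replicate n a).dedup = {a} := by
  ext b
  rw [Multiset.count_dedup]
  by_cases h : b = a <;>
    simp [h, Multiset.count_replicate, Multiset.mem_replicate, hn, Ne.symm]

lemma count_finset (t : Finset σ) (b : σ) : t.val.count b = if b ∈ t then 1 else 0 := by
  by_cases hb : b ∈ t
  · rw [if_pos hb, Multiset.count_eq_one_of_mem t.nodup hb]
  · rw [if_neg hb, Multiset.count_eq_zero]
    exact fun h => hb h

lemma count31 (a b x : σ) :
    (Multiset.replicate 3 a + {b}).count x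
      = (if a = x then 3 else 0) + (if x = b then 1 else 0) := by
  rw [Multiset.count_add, Multiset.count_replicate, Multiset.count_singleton]

lemma count211 (a : σ) (t : Finset σ) (x : σ) :
    (Multiset.replicate 2 a + t.val).count x
      = (if a = x then 2 else 0) + (if x ∈ t then 1 else 0) := by
  rw [Multiset.count_add, Multiset.count_replicate, count_finset]

end GentileAux

namespace GentileAux
open Finset
variable {σ : Type*} [DecidableEq σ] [Fintype σ] (R : Type*) [CommRing R]

lemma msymm_4 : msymm σ R (part 4 {4}) = psum σ R 4 := by
  rw [msymm, psum]
  refine (Finset.sum_bij (fun (a : σ) _ =>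
      (⟨⟨Multiset.replicate 4 a, by simp⟩, ?_⟩ : {a : Sym σ 4 // Nat.Partition.ofSym a = part 4 {4}}))
      (fun a _ => mem_univ _) ?_ ?_ ?_).symm
  · ext1
    erw [parts_ofSym']
    simp only [part_parts]
    rw [dedup_replicate' _ _ (by norm_num)]
    simp [Multiset.count_replicate]
  · intro a _ b _ h
    have h' : Multiset.replicate 4 a = Multiset.replicate 4 b :=
      congrArg (fun s => s.1.1) h
    exact Multiset.eq_of_mem_replicate
      (by rw [← h']; exact Multiset.mem_replicate.2 ⟨by norm_num, rfl⟩)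
  · rintro ⟨⟨m, hm⟩, hp⟩ _
    have hparts := congrArg Nat.Partition.parts hp
    erw [parts_ofSym'] at hparts
    simp only [part_parts] at hparts
    have hcard : m.dedup.card = 1 := by
      have := congrArg Multiset.card hparts
      simpa using this
    obtain ⟨a, ha⟩ := Multiset.card_eq_one.1 hcard
    have hcount : m.count a = 4 := by
      have : m.count a ∈ Multiset.map m.count m.dedup := by
        rw [ha]; simp
      rw [hparts] at this
      simpa using this
    refine ⟨a, mem_univ a, ?_⟩
    apply Subtype.ext; apply Subtype.ext
    show Multiset.replicate 4 a = m
    ext b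
    rw [Multiset.count_replicate]
    by_cases hb : b = a
    · subst hb; simp [hcount]
    · rw [if_neg (fun h => hb h.symm), eq_comm, Multiset.count_eq_zero]
      intro hmem
      have : b ∈ m.dedup := Multiset.mem_dedup.2 hmem
      rw [ha] at this
      exact hb (Multiset.mem_singleton.1 this)
  · intro a _
    show X a ^ 4 = ((Multiset.replicate 4 a).map X).prod
    rw [Multiset.map_replicate, Multiset.prod_replicate]

lemma msymm_1111 : msymm σ R (part 4 {1,1,1,1}) = esymm σ R 4 := by
  rw [msymm, esymm]
  refine (Finset.sum_bij (fun (t : Finset σ) (ht : t ∈ powersetCard 4 univ) =>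
      (⟨⟨t.val, (mem_powersetCard.1 ht).2⟩, ?_⟩ :
        {a : Sym σ 4 // Nat.Partition.ofSym a = part 4 {1,1,1,1}}))
      (fun t ht => mem_univ _) ?_ ?_ ?_).symm
  · ext1
    erw [parts_ofSym']
    simp only [part_parts]
    rw [Multiset.Nodup.dedup t.nodup]
    rw [Multiset.map_congr rfl (fun b hb => Multiset.count_eq_one_of_mem t.nodup hb)]
    rw [Multiset.map_const']
    have : Multiset.card t.val = 4 := (mem_powersetCard.1 ht).2
    rw [this]
    rfl
  · intro a _ b _ h
    have h' : a.val = b.val := congrArg (fun s => s.1.1) h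
    exact Finset.val_injective h'
  · rintro ⟨⟨m, hm⟩, hp⟩ _
    have hparts := congrArg Nat.Partition.parts hp
    erw [parts_ofSym'] at hparts
    simp only [part_parts] at hparts
    have hnodup : m.Nodup := by
      rw [Multiset.nodup_iff_count_eq_one]
      intro a ha
      have : m.count a ∈ Multiset.map m.count m.dedup :=
        Multiset.mem_map_of_mem _ (Multiset.mem_dedup.2 ha)
      rw [hparts] at this
      -- this : m.count a ∈ {1,1,1,1}
      simpa using this
    refine ⟨⟨m, hnodup⟩, ?_, ?_⟩
    · rw [mem_powersetCard]
      exact ⟨subset_univ _, hm⟩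
    · apply Subtype.ext; apply Subtype.ext; rfl
  · intro t ht
    show (∏ i ∈ t, X i : MvPolynomial σ R) = (Multiset.map X t.val).prod
    rfl

lemma msymm_22 : msymm σ R (part 4 {2,2}) = ∑ t ∈ powersetCard 2 univ, (∏ i ∈ t, X i : MvPolynomial σ R)^2 := by
  rw [msymm]
  refine (Finset.sum_bij (fun (t : Finset σ) (ht : t ∈ powersetCard 2 univ) =>
      (⟨⟨t.val + t.val, by
          have hc : Multiset.card t.val = 2 := (mem_powersetCard.1 ht).2
          rw [Multiset.card_add, hc]⟩, ?_⟩ :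
        {a : Sym σ 4 // Nat.Partition.ofSym a = part 4 {2,2}}))
      (fun t ht => mem_univ _) ?_ ?_ ?_).symm
  · ext1
    erw [parts_ofSym']
    simp only [part_parts]
    have hded : (t.val + t.val).dedup = t.val := by
      ext b
      rw [Multiset.count_dedup]
      by_cases hb : b ∈ t.val
      · rw [if_pos (Multiset.mem_add.2 (Or.inl hb)),
          Multiset.count_eq_one_of_mem t.nodup hb]
      · rw [if_neg (by simp [hb]), eq_comm, Multiset.count_eq_zero]
        exact hb
    rw [hded]
    rw [Multiset.map_congr rfl (fun b hb => by
      rw [Multiset.count_add, Multiset.count_eq_one_of_mem t.nodup hb])]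
    rw [Multiset.map_const']
    have hc : Multiset.card t.val = 2 := (mem_powersetCard.1 ht).2
    rw [hc]
    decide
  · intro a ha b hb h
    have h' : a.val + a.val = b.val + b.val := congrArg (fun s => s.1.1) h
    apply Finset.val_injective
    ext x
    have := congrArg (Multiset.count x) h'
    simp only [Multiset.count_add] at this
    omega
  · rintro ⟨⟨m, hm⟩, hp⟩ _
    have hparts := congrArg Nat.Partition.parts hp
    erw [parts_ofSym'] at hparts
    simp only [part_parts] at hparts
    have hcnt : ∀ a ∈ m, m.count a = 2 := by
      intro a ha
      have : m.count a ∈ Multiset.map m.count m.dedup :=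
        Multiset.mem_map_of_mem _ (Multiset.mem_dedup.2 ha)
      rw [hparts] at this
      simpa using this
    have hcard2 : m.toFinset.card = 2 := by
      have := congrArg Multiset.card hparts
      exact (by simpa using this : m.dedup.card = 2)
    refine ⟨m.toFinset, ?_, ?_⟩
    · rw [mem_powersetCard]; exact ⟨subset_univ _, hcard2⟩
    · apply Subtype.ext; apply Subtype.ext
      show m.toFinset.val + m.toFinset.val = m
      ext b
      rw [Multiset.count_add]
      have : m.toFinset.val = m.dedup := rfl
      rw [this, Multiset.count_dedup]
      by_cases hb : b ∈ m
      · rw [if_pos hb, hcnt b hb]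
      · rw [if_neg hb, eq_comm, Multiset.count_eq_zero]
        exact hb
  · intro t ht
    show ((∏ i ∈ t, X i : MvPolynomial σ R))^2 = (Multiset.map X (t.val + t.val)).prod
    rw [Multiset.map_add, Multiset.prod_add, sq]
    rfl

lemma msymm_31 : msymm σ R (part 4 {3,1}) =
    ∑ p ∈ (univ : Finset σ).sigma (fun i => univ.erase i),
      (X p.1 ^ 3 * X p.2 : MvPolynomial σ R) := by
  rw [msymm]
  refine (Finset.sum_bij (fun (p : (_ : σ) × σ) (hp : p ∈ (univ : Finset σ).sigma (fun i => univ.erase i)) =>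
      (⟨⟨Multiset.replicate 3 p.1 + {p.2}, by simp⟩, ?_⟩ :
        {a : Sym σ 4 // Nat.Partition.ofSym a = part 4 {3,1}}))
      (fun p hp => mem_univ _) ?_ ?_ ?_).symm
  · have hab : p.2 ≠ p.1 := (Finset.mem_erase.1 (Finset.mem_sigma.1 hp).2).1
    set m : Multiset σ := Multiset.replicate 3 p.1 + {p.2} with hm
    ext1
    erw [parts_ofSym']
    simp only [part_parts]
    have hca : m.count p.1 = 3 := by rw [hm, count31, if_pos rfl, if_neg (Ne.symm hab)]
    have hcb : m.count p.2 = 1 := by rw [hm, count31, if_neg (fun h => hab h.symm), if_pos rfl]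
    have hded : m.dedup = {p.1, p.2} := by
      ext b
      rw [Multiset.count_dedup, Multiset.insert_eq_cons, Multiset.count_cons,
        Multiset.count_singleton]
      by_cases h1 : b = p.1
      · rw [if_pos (by rw [h1]; exact Multiset.mem_add.2 (Or.inl (Multiset.mem_replicate.2 ⟨by norm_num, rfl⟩)))]
        rw [if_pos h1, if_neg (by rw [h1]; exact Ne.symm hab)]
      · by_cases h2 : b = p.2
        · rw [if_pos (by rw [h2]; exact Multiset.mem_add.2 (Or.inr (Multiset.mem_singleton_self _)))]
          rw [if_neg h1, if_pos h2]
        · rw [if_neg (by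
            intro hmem
            rcases Multiset.mem_add.1 hmem with h | h
            · exact h1 (Multiset.eq_of_mem_replicate h)
            · exact h2 (Multiset.mem_singleton.1 h)), if_neg h1, if_neg h2]
    rw [hded, Multiset.insert_eq_cons, Multiset.map_cons, Multiset.map_singleton, hca, hcb]
    rfl
  · intro p hp q hq h
    have hab : p.2 ≠ p.1 := (Finset.mem_erase.1 (Finset.mem_sigma.1 hp).2).1
    have hcd : q.2 ≠ q.1 := (Finset.mem_erase.1 (Finset.mem_sigma.1 hq).2).1
    have h' : Multiset.replicate 3 p.1 + {p.2} = Multiset.replicate 3 q.1 + {q.2} :=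
      congrArg (fun s => s.1.1) h
    have key : ∀ x : σ, (if p.1 = x then 3 else 0) + (if x = p.2 then 1 else 0) =
        (if q.1 = x then 3 else 0) + (if x = q.2 then 1 else 0) := by
      intro x
      have := congrArg (Multiset.count x) h'
      rwa [count31, count31] at this
    have h1 : p.1 = q.1 := by
      by_cases hq1 : q.1 = p.1
      · exact hq1.symm
      · exfalso
        have k := key p.1
        rw [if_pos rfl, if_neg (fun h : p.1 = p.2 => hab h.symm), if_neg hq1] at k
        split_ifs at k <;> omega
    have h2 : p.2 = q.2 := by
      have k := key p.2
      rw [if_pos rfl, if_neg (fun h : p.1 = p.2 => hab h.symm), ← h1,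
        if_neg (fun h : p.1 = p.2 => hab h.symm)] at k
      split_ifs at k with h
      · exact h
      · omega
    exact Sigma.ext h1 (heq_of_eq h2)
  · rintro ⟨⟨m, hm⟩, hp⟩ _
    have hparts := congrArg Nat.Partition.parts hp
    erw [parts_ofSym'] at hparts
    simp only [part_parts] at hparts
    have hcard : m.dedup.card = 2 := by
      have := congrArg Multiset.card hparts
      simpa using this
    obtain ⟨x, y, hxy⟩ := Multiset.card_eq_two.1 hcard
    have hne : x ≠ y := by
      have := m.nodup_dedup
      rw [hxy] at this
      simpa using (Multiset.nodup_cons.1 this).1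
    have hcx : m.count x ∈ ({3,1} : Multiset ℕ) := by
      rw [← hparts]; exact Multiset.mem_map_of_mem _ (by rw [hxy]; simp)
    have hcy : m.count y ∈ ({3,1} : Multiset ℕ) := by
      rw [← hparts]; exact Multiset.mem_map_of_mem _ (by rw [hxy]; simp)
    simp only [Multiset.insert_eq_cons, Multiset.mem_cons, Multiset.mem_singleton] at hcx hcy
    have htf : m.toFinset = ({x, y} : Finset σ) := by
      ext b
      rw [Multiset.mem_toFinset, ← Multiset.mem_dedup, hxy]
      simp
    have hsum : m.count x + m.count y = 4 := by
      have h1 := Multiset.toFinset_sum_count_eq m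
      rw [htf, Finset.sum_pair hne, hm] at h1
      exact h1
    have hmem : ∀ b, b ≠ x → b ≠ y → m.count b = 0 := by
      intro b hb1 hb2
      rw [Multiset.count_eq_zero]
      intro hbm
      have := hxy ▸ Multiset.mem_dedup.2 hbm
      simp only [Multiset.insert_eq_cons, Multiset.mem_cons, Multiset.mem_singleton] at this
      tauto
    rcases hcx with hcx | hcx <;> rcases hcy with hcy | hcy
    · omega
    · refine ⟨⟨x, y⟩, Finset.mem_sigma.2 ⟨mem_univ _, Finset.mem_erase.2 ⟨Ne.symm hne, mem_univ _⟩⟩, ?_⟩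
      apply Subtype.ext; apply Subtype.ext
      show Multiset.replicate 3 x + {y} = m
      ext b
      rw [count31]
      by_cases h1 : b = x
      · subst h1; rw [if_pos rfl, if_neg hne, hcx]
      · by_cases h2 : b = y
        · subst h2; rw [if_neg (fun h => h1 h.symm), if_pos rfl, hcy]
        · rw [if_neg (fun h => h1 h.symm), if_neg h2, hmem b h1 h2]
    · refine ⟨⟨y, x⟩, Finset.mem_sigma.2 ⟨mem_univ _, Finset.mem_erase.2 ⟨hne, mem_univ _⟩⟩, ?_⟩
      apply Subtype.ext; apply Subtype.ext
      show Multiset.replicate 3 y + {x} = m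
      ext b
      rw [count31]
      by_cases h1 : b = y
      · subst h1; rw [if_pos rfl, if_neg (Ne.symm hne), hcy]
      · by_cases h2 : b = x
        · subst h2; rw [if_neg (fun h => h1 h.symm), if_pos rfl, hcx]
        · rw [if_neg (fun h => h1 h.symm), if_neg h2, hmem b h2 h1]
    · omega
  · intro p hp
    show (X p.1 ^ 3 * X p.2 : MvPolynomial σ R) = (Multiset.map X (Multiset.replicate 3 p.1 + {p.2})).prod
    rw [Multiset.map_add, Multiset.prod_add, Multiset.map_replicate, Multiset.prod_replicate,
      Multiset.map_singleton, Multiset.prod_singleton]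

lemma msymm_211 : msymm σ R (part 4 {2,1,1}) =
    ∑ p ∈ (univ : Finset σ).sigma (fun i => powersetCard 2 (univ.erase i)),
      (X p.1 ^ 2 * ∏ j ∈ p.2, X j : MvPolynomial σ R) := by
  rw [msymm]
  refine (Finset.sum_bij (fun (p : (_ : σ) × Finset σ)
      (hp : p ∈ (univ : Finset σ).sigma (fun i => powersetCard 2 (univ.erase i))) =>
      (⟨⟨Multiset.replicate 2 p.1 + p.2.val, by
          have hc : Multiset.card p.2.val = 2 :=
            (mem_powersetCard.1 (Finset.mem_sigma.1 hp).2).2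
          rw [Multiset.card_add, Multiset.card_replicate, hc]⟩, ?_⟩ :
        {a : Sym σ 4 // Nat.Partition.ofSym a = part 4 {2,1,1}}))
      (fun p hp => mem_univ _) ?_ ?_ ?_).symm
  · have hsub := (mem_powersetCard.1 (Finset.mem_sigma.1 hp).2).1
    have hc2 : Multiset.card p.2.val = 2 := (mem_powersetCard.1 (Finset.mem_sigma.1 hp).2).2
    have hnm : p.1 ∉ p.2 := fun h => (Finset.mem_erase.1 (hsub h)).1 rfl
    ext1
    erw [parts_ofSym']
    simp only [part_parts]
    have hded : (Multiset.replicate 2 p.1 + p.2.val).dedup = p.1 ::ₘ p.2.val := by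
      ext b
      rw [Multiset.count_dedup, Multiset.count_cons, count_finset]
      by_cases h1 : b = p.1
      · rw [if_pos (by rw [h1]; exact Multiset.mem_add.2 (Or.inl (Multiset.mem_replicate.2 ⟨by norm_num, rfl⟩))),
          if_pos h1, if_neg (h1 ▸ hnm)]
      · by_cases h2 : b ∈ p.2
        · rw [if_pos (Multiset.mem_add.2 (Or.inr h2)), if_neg h1, if_pos h2]
        · rw [if_neg (by
            intro hmem
            rcases Multiset.mem_add.1 hmem with h | h
            · exact h1 (Multiset.eq_of_mem_replicate h)
            · exact h2 h), if_neg h1, if_neg h2]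
    rw [hded, Multiset.map_cons]
    have hcp : (Multiset.replicate 2 p.1 + p.2.val).count p.1 = 2 := by
      rw [count211, if_pos rfl, if_neg hnm]
    have hmap : Multiset.map (fun x => Multiset.count x (Multiset.replicate 2 p.1 + p.2.val)) p.2.val
        = Multiset.map (fun _ => (1:ℕ)) p.2.val :=
      Multiset.map_congr rfl (fun b hb => by
        rw [show Multiset.count b (Multiset.replicate 2 p.1 + p.2.val)
            = (Multiset.replicate 2 p.1 + p.2.val).count b from rfl, count211,
          if_neg (fun h : p.1 = b => hnm (h ▸ (show b ∈ p.2 from hb))), if_pos (show b ∈ p.2 from hb)])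
    rw [show Multiset.count p.1 (Multiset.replicate 2 p.1 + p.2.val)
        = (Multiset.replicate 2 p.1 + p.2.val).count p.1 from rfl, hcp, hmap,
      Multiset.map_const', hc2]
    decide
  · intro p hp q hq h
    have hnm : p.1 ∉ p.2 := fun hx =>
      (Finset.mem_erase.1 ((mem_powersetCard.1 (Finset.mem_sigma.1 hp).2).1 hx)).1 rfl
    have hnm' : q.1 ∉ q.2 := fun hx =>
      (Finset.mem_erase.1 ((mem_powersetCard.1 (Finset.mem_sigma.1 hq).2).1 hx)).1 rfl
    have h' : Multiset.replicate 2 p.1 + p.2.val = Multiset.replicate 2 q.1 + q.2.val :=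
      congrArg (fun s => s.1.1) h
    have key : ∀ x : σ, (if p.1 = x then 2 else 0) + (if x ∈ p.2 then 1 else 0) =
        (if q.1 = x then 2 else 0) + (if x ∈ q.2 then 1 else 0) := by
      intro x
      have := congrArg (Multiset.count x) h'
      rwa [show Multiset.count x (Multiset.replicate 2 p.1 + p.2.val)
          = (Multiset.replicate 2 p.1 + p.2.val).count x from rfl,
        show Multiset.count x (Multiset.replicate 2 q.1 + q.2.val)
          = (Multiset.replicate 2 q.1 + q.2.val).count x from rfl, count211, count211] at this
    have h1 : p.1 = q.1 := by
      by_cases hq1 : q.1 = p.1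
      · exact hq1.symm
      · exfalso
        have k := key p.1
        rw [if_pos rfl, if_neg hnm, if_neg hq1] at k
        split_ifs at k <;> omega
    have h2 : p.2 = q.2 := by
      ext b
      by_cases hb : p.1 = b
      · subst hb
        rw [← h1] at hnm'
        exact iff_of_false hnm hnm'
      · have k := key b
        rw [← h1, if_neg hb] at k
        constructor
        · intro hmem
          by_contra hnot
          rw [if_pos hmem, if_neg hnot] at k
          omega
        · intro hmem
          by_contra hnot
          rw [if_neg hnot, if_pos hmem] at k
          omega
    exact Sigma.ext h1 (heq_of_eq h2)
  · rintro ⟨⟨m, hm⟩, hp⟩ _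
    have hparts := congrArg Nat.Partition.parts hp
    erw [parts_ofSym'] at hparts
    simp only [part_parts] at hparts
    have hcard : m.dedup.card = 3 := by
      have := congrArg Multiset.card hparts
      simpa using this
    obtain ⟨x, y, z, hxyz⟩ := Multiset.card_eq_three.1 hcard
    have hnd := m.nodup_dedup
    rw [hxyz] at hnd
    have hxy : x ≠ y := by intro h; subst h; simp [Multiset.insert_eq_cons] at hnd
    have hxz : x ≠ z := by intro h; subst h; simp [Multiset.insert_eq_cons] at hnd
    have hyz : y ≠ z := by intro h; subst h; simp [Multiset.insert_eq_cons] at hnd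
    have hcx : m.count x = 2 ∨ m.count x = 1 := by
      have : m.count x ∈ ({2,1,1} : Multiset ℕ) := by
        rw [← hparts]; exact Multiset.mem_map_of_mem _ (by rw [hxyz]; simp)
      simpa using this
    have hcy : m.count y = 2 ∨ m.count y = 1 := by
      have : m.count y ∈ ({2,1,1} : Multiset ℕ) := by
        rw [← hparts]; exact Multiset.mem_map_of_mem _ (by rw [hxyz]; simp)
      simpa using this
    have hcz : m.count z = 2 ∨ m.count z = 1 := by
      have : m.count z ∈ ({2,1,1} : Multiset ℕ) := by
        rw [← hparts]; exact Multiset.mem_map_of_mem _ (by rw [hxyz]; simp)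
      simpa using this
    have htf : m.toFinset = ({x, y, z} : Finset σ) := by
      ext b
      rw [Multiset.mem_toFinset, ← Multiset.mem_dedup, hxyz]
      simp
    have hsum : m.count x + m.count y + m.count z = 4 := by
      have h1 := Multiset.toFinset_sum_count_eq m
      rw [htf, Finset.sum_insert (by simp [hxy, hxz]), Finset.sum_pair hyz, hm] at h1
      omega
    have hmem0 : ∀ b, b ≠ x → b ≠ y → b ≠ z → m.count b = 0 := by
      intro b h1 h2 h3
      rw [Multiset.count_eq_zero]
      intro hbm
      have := hxyz ▸ Multiset.mem_dedup.2 hbm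
      simp only [Multiset.insert_eq_cons, Multiset.mem_cons, Multiset.mem_singleton] at this
      tauto
    rcases hcx with hcx | hcx <;> rcases hcy with hcy | hcy <;> rcases hcz with hcz | hcz
    case inl.inl.inl => omega
    case inl.inl.inr => omega
    case inl.inr.inl => omega
    case inl.inr.inr =>
      refine ⟨⟨x, ({y, z} : Finset σ)⟩, Finset.mem_sigma.2 ⟨mem_univ _, mem_powersetCard.2
        ⟨fun w hw => by
          rcases Finset.mem_insert.1 hw with h | h
          · exact Finset.mem_erase.2 ⟨by rw [h]; exact Ne.symm hxy, mem_univ _⟩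
          · exact Finset.mem_erase.2 ⟨by rw [Finset.mem_singleton.1 h]; exact Ne.symm hxz, mem_univ _⟩,
         Finset.card_pair hyz⟩⟩, ?_⟩
      apply Subtype.ext; apply Subtype.ext
      show Multiset.replicate 2 x + ({y, z} : Finset σ).val = m
      ext b
      rw [show Multiset.count b (Multiset.replicate 2 x + ({y, z} : Finset σ).val)
          = (Multiset.replicate 2 x + ({y, z} : Finset σ).val).count b from rfl, count211]
      by_cases h1 : b = x
      · subst h1
        rw [if_pos rfl, if_neg (by simp [hxy, hxz]), hcx]
      · by_cases h2 : b = y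
        · subst h2
          rw [if_neg (fun h => h1 h.symm), if_pos (by simp), hcy]
        · by_cases h3 : b = z
          · subst h3
            rw [if_neg (fun h => h1 h.symm), if_pos (by simp), hcz]
          · rw [if_neg (fun h => h1 h.symm), if_neg (by simp [h2, h3]), hmem0 b h1 h2 h3]
    case inr.inl.inl => omega
    case inr.inl.inr =>
      refine ⟨⟨y, ({x, z} : Finset σ)⟩, Finset.mem_sigma.2 ⟨mem_univ _, mem_powersetCard.2
        ⟨fun w hw => by
          rcases Finset.mem_insert.1 hw with h | h
          · exact Finset.mem_erase.2 ⟨by rw [h]; exact hxy, mem_univ _⟩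
          · exact Finset.mem_erase.2 ⟨by rw [Finset.mem_singleton.1 h]; exact Ne.symm hyz, mem_univ _⟩,
         Finset.card_pair hxz⟩⟩, ?_⟩
      apply Subtype.ext; apply Subtype.ext
      show Multiset.replicate 2 y + ({x, z} : Finset σ).val = m
      ext b
      rw [show Multiset.count b (Multiset.replicate 2 y + ({x, z} : Finset σ).val)
          = (Multiset.replicate 2 y + ({x, z} : Finset σ).val).count b from rfl, count211]
      by_cases h1 : b = y
      · subst h1
        rw [if_pos rfl, if_neg (by simp [Ne.symm hxy, hyz]), hcy]
      · by_cases h2 : b = x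
        · subst h2
          rw [if_neg (fun h => h1 h.symm), if_pos (by simp), hcx]
        · by_cases h3 : b = z
          · subst h3
            rw [if_neg (fun h => h1 h.symm), if_pos (by simp), hcz]
          · rw [if_neg (fun h => h1 h.symm), if_neg (by simp [h2, h3]), hmem0 b h2 h1 h3]
    case inr.inr.inl =>
      refine ⟨⟨z, ({x, y} : Finset σ)⟩, Finset.mem_sigma.2 ⟨mem_univ _, mem_powersetCard.2
        ⟨fun w hw => by
          rcases Finset.mem_insert.1 hw with h | h
          · exact Finset.mem_erase.2 ⟨by rw [h]; exact hxz, mem_univ _⟩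
          · exact Finset.mem_erase.2 ⟨by rw [Finset.mem_singleton.1 h]; exact hyz, mem_univ _⟩,
         Finset.card_pair hxy⟩⟩, ?_⟩
      apply Subtype.ext; apply Subtype.ext
      show Multiset.replicate 2 z + ({x, y} : Finset σ).val = m
      ext b
      rw [show Multiset.count b (Multiset.replicate 2 z + ({x, y} : Finset σ).val)
          = (Multiset.replicate 2 z + ({x, y} : Finset σ).val).count b from rfl, count211]
      by_cases h1 : b = z
      · subst h1
        rw [if_pos rfl, if_neg (by simp [Ne.symm hxz, Ne.symm hyz]), hcz]
      · by_cases h2 : b = x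
        · subst h2
          rw [if_neg (fun h => h1 h.symm), if_pos (by simp), hcx]
        · by_cases h3 : b = y
          · subst h3
            rw [if_neg (fun h => h1 h.symm), if_pos (by simp), hcy]
          · rw [if_neg (fun h => h1 h.symm), if_neg (by simp [h2, h3]), hmem0 b h2 h3 h1]
    case inr.inr.inr => omega
  · intro p hp
    show (X p.1 ^ 2 * ∏ j ∈ p.2, X j : MvPolynomial σ R) =
      (Multiset.map X (Multiset.replicate 2 p.1 + p.2.val)).prod
    rw [Multiset.map_add, Multiset.prod_add, Multiset.map_replicate, Multiset.prod_replicate]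
    rfl

lemma newton1 : psum σ R 1 = esymm σ R 1 := by
  have h := psum_eq_mul_esymm_sub_sum σ R 1 one_pos
  rw [show (Finset.filter (fun a : ℕ×ℕ => a.1 ∈ Set.Ioo 0 1) (Finset.HasAntidiagonal.antidiagonal 1)) = ∅ from by decide] at h
  rw [Finset.sum_empty] at h
  rw [h]; ring

lemma newton2 : psum σ R 2 = esymm σ R 1 * psum σ R 1 - 2 * esymm σ R 2 := by
  have h := psum_eq_mul_esymm_sub_sum σ R 2 two_pos
  rw [show (Finset.filter (fun a : ℕ×ℕ => a.1 ∈ Set.Ioo 0 2) (Finset.HasAntidiagonal.antidiagonal 2)) = {(1,1)} from by decide,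
    Finset.sum_singleton] at h
  rw [h]; ring

lemma newton3 : psum σ R 3 = 3 * esymm σ R 3 + esymm σ R 1 * psum σ R 2 - esymm σ R 2 * psum σ R 1 := by
  have h := psum_eq_mul_esymm_sub_sum σ R 3 (by norm_num)
  rw [show (Finset.filter (fun a : ℕ×ℕ => a.1 ∈ Set.Ioo 0 3) (Finset.HasAntidiagonal.antidiagonal 3)) = {(1,2),(2,1)} from by decide,
    Finset.sum_insert (by decide), Finset.sum_singleton] at h
  rw [h]; ring

lemma newton4 : psum σ R 4 = -(4 * esymm σ R 4) + esymm σ R 1 * psum σ R 3 - esymm σ R 2 * psum σ R 2 + esymm σ R 3 * psum σ R 1 := by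
  have h := psum_eq_mul_esymm_sub_sum σ R 4 (by norm_num)
  rw [show (Finset.filter (fun a : ℕ×ℕ => a.1 ∈ Set.Ioo 0 4) (Finset.HasAntidiagonal.antidiagonal 4)) = {(1,3),(2,2),(3,1)} from by decide,
    Finset.sum_insert (by decide), Finset.sum_insert (by decide), Finset.sum_singleton] at h
  rw [h]; ring

lemma p2_mul_e2 : psum σ R 2 * esymm σ R 2 =
    (∑ p ∈ (univ : Finset σ).sigma (fun i => univ.erase i),
      (X p.1 ^ 3 * X p.2 : MvPolynomial σ R)) +
    ∑ p ∈ (univ : Finset σ).sigma (fun i => powersetCard 2 (univ.erase i)),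
      (X p.1 ^ 2 * ∏ j ∈ p.2, X j : MvPolynomial σ R) := by
  rw [psum, esymm, Finset.sum_mul_sum, Finset.sum_sigma, Finset.sum_sigma]
  rw [← Finset.sum_add_distrib]
  refine Finset.sum_congr rfl (fun i _ => ?_)
  rw [← Finset.sum_filter_add_sum_filter_not (powersetCard 2 univ) (fun t => i ∈ t)]
  congr 1
  · refine (Finset.sum_bij (fun (j : σ) (hj : j ∈ univ.erase i) =>
        ({i, j} : Finset σ)) ?_ ?_ ?_ ?_).symm
    · intro j hj
      rw [Finset.mem_filter, mem_powersetCard]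
      exact ⟨⟨subset_univ _, Finset.card_pair (fun h => (Finset.mem_erase.1 hj).1 h.symm)⟩,
        Finset.mem_insert_self _ _⟩
    · intro a ha b hb h
      have hai : a ≠ i := (Finset.mem_erase.1 ha).1
      have h' : ({i, a} : Finset σ) = {i, b} := h
      have : a ∈ ({i, b} : Finset σ) := by
        rw [← h']; exact Finset.mem_insert.2 (Or.inr (Finset.mem_singleton_self a))
      rcases Finset.mem_insert.1 this with h'' | h''
      · exact absurd h'' hai
      · exact Finset.mem_singleton.1 h''
    · intro t ht
      rw [Finset.mem_filter, mem_powersetCard] at ht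
      obtain ⟨⟨_, hc⟩, hi⟩ := ht
      obtain ⟨a, b, hab, rfl⟩ := Finset.card_eq_two.1 hc
      rcases Finset.mem_insert.1 hi with h | h
      · subst h
        exact ⟨b, Finset.mem_erase.2 ⟨Ne.symm hab, mem_univ _⟩, rfl⟩
      · rw [Finset.mem_singleton] at h
        subst h
        refine ⟨a, Finset.mem_erase.2 ⟨hab, mem_univ _⟩, ?_⟩
        rw [Finset.pair_comm]
    · intro j hj
      have hij : i ≠ j := fun h => (Finset.mem_erase.1 hj).1 h.symm
      rw [Finset.prod_pair hij]
      ring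
  · have : Finset.filter (fun t => i ∉ t) (powersetCard 2 univ)
        = powersetCard 2 (univ.erase i) := by
      ext t
      rw [Finset.mem_filter, mem_powersetCard, mem_powersetCard, Finset.subset_erase]
      tauto
    rw [this]

lemma aeval_sq_psum (k : ℕ) :
    aeval (fun i => (X i : MvPolynomial σ R)^2) (psum σ R k) = psum σ R (2*k) := by
  rw [psum, psum, map_sum]
  refine Finset.sum_congr rfl (fun i _ => ?_)
  rw [map_pow, aeval_X, ← pow_mul, mul_comm]

lemma aeval_sq_esymm : aeval (fun i => (X i : MvPolynomial σ R)^2) (esymm σ R 2)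
    = ∑ t ∈ powersetCard 2 univ, (∏ i ∈ t, X i : MvPolynomial σ R)^2 := by
  rw [esymm, map_sum]
  refine Finset.sum_congr rfl (fun t _ => ?_)
  rw [map_prod]
  simp_rw [aeval_X]
  rw [Finset.prod_pow]

end GentileAux

open GentileAux Finset in
/-- Canonical partition function Z_3(β,4): ideal Gentile gas, N = 4 particles, maximum occupation number q = 3, expressed through the power sums
`p_k = Z(kβ)`: sum of monomial symmetric polynomials over the partitions listed. -/
theorem gentile_stmt_9 (σ : Type*) [Fintype σ] [DecidableEq σ]
    (R : Type*) [CommRing R] [Algebra ℚ R] :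
    msymm σ R (part 4 {3,1}) + msymm σ R (part 4 {2,2}) + msymm σ R (part 4 {2,1,1}) + msymm σ R (part 4 {1,1,1,1}) =
      (1/24 : ℚ) • psum σ R 1 ^ 4 + (1/4 : ℚ) • (psum σ R 1 ^ 2 * psum σ R 2) + (1/8 : ℚ) • psum σ R 2 ^ 2 + (1/3 : ℚ) • (psum σ R 1 * psum σ R 3) - (3/4 : ℚ) • psum σ R 4 := by
  rw [msymm_31 R, msymm_22 R, msymm_211 R, msymm_1111 R]
  set p1 := psum σ R 1
  set p2 := psum σ R 2
  set p3 := psum σ R 3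
  set p4 := psum σ R 4
  set e1 := esymm σ R 1
  set e2 := esymm σ R 2
  set e3 := esymm σ R 3
  set e4 := esymm σ R 4
  set m31 := ∑ p ∈ (univ : Finset σ).sigma (fun i => univ.erase i),
      (X p.1 ^ 3 * X p.2 : MvPolynomial σ R) with hm31def
  set m22 := ∑ t ∈ powersetCard 2 (univ : Finset σ), (∏ i ∈ t, X i : MvPolynomial σ R)^2 with hm22def
  set m211 := ∑ p ∈ (univ : Finset σ).sigma (fun i => powersetCard 2 (univ.erase i)),
      (X p.1 ^ 2 * ∏ j ∈ p.2, X j : MvPolynomial σ R) with hm211def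
  have N1 := newton1 (σ := σ) R
  have N2 := newton2 (σ := σ) R
  have N3 := newton3 (σ := σ) R
  have N4 := newton4 (σ := σ) R
  have hA2 : 2 * e2 = p1^2 - p2 := by linear_combination N2 - p1 * N1
  have hA3 : 3 * e3 = p3 - p1*p2 + e2*p1 := by linear_combination (-1 : MvPolynomial σ R) * N3 + p2 * N1
  have hA4 : 4 * e4 = p1*p3 - e2*p2 + e3*p1 - p4 := by linear_combination N4 - p3 * N1
  have hB211 : p2 * e2 = m31 + m211 := p2_mul_e2 R
  have hB22 : 2 * m22 = p2^2 - p4 := by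
    have h := congrArg (aeval (fun i => (X i : MvPolynomial σ R)^2)) hA2
    simp only [map_mul, map_sub, map_pow, map_ofNat] at h
    have hp1 : (aeval fun i => (X i : MvPolynomial σ R)^2) p1 = p2 := by
      have h21 : (2*1 : ℕ) = 2 := rfl
      exact h21 ▸ aeval_sq_psum (σ := σ) R 1
    have hp2 : (aeval fun i => (X i : MvPolynomial σ R)^2) p2 = p4 := by
      have h := aeval_sq_psum (σ := σ) R 2
      rw [show (2*2 : ℕ) = 4 from rfl] at h
      exact h
    rw [aeval_sq_esymm R, hp1, hp2, ← hm22def] at h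
    exact h
  have key : (24:ℚ) • (m31 + m22 + m211 + e4) =
      (24:ℚ) • ((1/24 : ℚ) • p1 ^ 4 + (1/4 : ℚ) • (p1 ^ 2 * p2) + (1/8 : ℚ) • p2 ^ 2
        + (1/3 : ℚ) • (p1 * p3) - (3/4 : ℚ) • p4) := by
    simp only [smul_add, smul_sub, smul_smul]
    norm_num
    simp only [Algebra.smul_def, map_ofNat]
    linear_combination (p1^2 + 9*p2) * hA2 + 2*p1 * hA3 + 6 * hA4 + 12 * hB22 - 24 * hB211
  have := congrArg (fun z => (1/24:ℚ) • z) key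
  simpa [smul_smul] using this
end

section
/- The sum of the monomial symmetric polynomials over the partitions of 5 with all parts at most 2 satisfies m_{(2,2,1)} + m_{(2,1,1,1)} + m_{(1,1,1,1,1)} = (1/120) p_1^5 + (1/12) p_1^3 p_2 + (1/8) p_1 p_2^2 - (1/3) p_1^2 p_3 - (1/3) p_2 p_3 + (1/4) p_1 p_4 + (1/5) p_5. (This is the canonical partition function Z_2(β,5) of an ideal Gentile gas with N = 5 particles and maximum occupation number q = 2, expressed through the single-particle partition functions Z(kβ) = p_k.) -/
open MvPolynomial

section Aux

variable {σ : Type*} [Fintype σ] [DecidableEq σ] {R : Type*} [CommRing R] [Algebra ℚ R]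

/-- classification of multisets of 1s and 2s summing to 5 -/
lemma ms_classify (m : Multiset ℕ) (h1 : ∀ x ∈ m, x = 1 ∨ x = 2) (h2 : m.sum = 5) :
    m = {2,2,1} ∨ m = {2,1,1,1} ∨ m = {1,1,1,1,1} := by
  have hm : m = Multiset.replicate (m.count 2) 2 + Multiset.replicate (m.count 1) 1 := by
    rw [Multiset.ext]
    intro y
    simp only [Multiset.count_add, Multiset.count_replicate]
    by_cases hy1 : y = 1
    · subst hy1; simp
    by_cases hy2 : y = 2
    · subst hy2; simp
    · have h0 : m.count y = 0 := Multiset.count_eq_zero.2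
        (fun hy => by rcases h1 y hy with h | h <;> simp_all)
      have e1 : ¬ ((2:ℕ) = y) := fun h => hy2 h.symm
      have e2 : ¬ ((1:ℕ) = y) := fun h => hy1 h.symm
      simp [h0, e1, e2]
  rw [hm] at h2 ⊢
  generalize m.count 2 = a at h2 ⊢
  generalize m.count 1 = b at h2 ⊢
  rw [Multiset.sum_add, Multiset.sum_replicate, Multiset.sum_replicate, smul_eq_mul,
    smul_eq_mul] at h2
  have hab : a = 0 ∧ b = 5 ∨ a = 1 ∧ b = 3 ∨ a = 2 ∧ b = 1 := by omega
  rcases hab with ⟨rfl, rfl⟩ | ⟨rfl, rfl⟩ | ⟨rfl, rfl⟩ <;> decide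

lemma ofSym_iff (s : Sym σ 5) :
    (Nat.Partition.ofSym s = part 5 {2,2,1} ∨ Nat.Partition.ofSym s = part 5 {2,1,1,1} ∨
      Nat.Partition.ofSym s = part 5 {1,1,1,1,1}) ↔ ∀ i, Multiset.count i s.1 ≤ 2 := by
  constructor
  · intro h i
    by_cases hi : i ∈ s.1
    · have hmem : Multiset.count i s.1 ∈ (Nat.Partition.ofSym s).parts := by
        show Multiset.count i s.1 ∈ s.1.dedup.map s.1.count
        exact Multiset.mem_map.2 ⟨i, Multiset.mem_dedup.2 hi, rfl⟩
      rcases h with h | h | h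
      · rw [h] at hmem
        have hm2 : Multiset.count i s.1 ∈ ({2,2,1} : Multiset ℕ) := hmem
        simp only [Multiset.insert_eq_cons, Multiset.mem_cons, Multiset.mem_singleton] at hm2
        omega
      · rw [h] at hmem
        have hm2 : Multiset.count i s.1 ∈ ({2,1,1,1} : Multiset ℕ) := hmem
        simp only [Multiset.insert_eq_cons, Multiset.mem_cons, Multiset.mem_singleton] at hm2
        omega
      · rw [h] at hmem
        have hm2 : Multiset.count i s.1 ∈ ({1,1,1,1,1} : Multiset ℕ) := hmem
        simp only [Multiset.insert_eq_cons, Multiset.mem_cons, Multiset.mem_singleton] at hm2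
        omega
    · have h0 := Multiset.count_eq_zero.2 hi
      omega
  · intro h
    have hparts : ∀ x ∈ (Nat.Partition.ofSym s).parts, x = 1 ∨ x = 2 := by
      intro x hx
      obtain ⟨i, hi, rfl⟩ := Multiset.mem_map.1 hx
      have h2 := h i
      have hpos : 0 < s.1.count i := Multiset.count_pos.2 (Multiset.mem_dedup.1 hi)
      omega
    rcases ms_classify _ hparts (Nat.Partition.ofSym s).parts_sum with h | h | h
    · exact Or.inl (Nat.Partition.ext h)
    · exact Or.inr (Or.inl (Nat.Partition.ext h))
    · exact Or.inr (Or.inr (Nat.Partition.ext h))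

/-- power sums over a finset -/
noncomputable def PS (s : Finset σ) (k : ℕ) : MvPolynomial σ R := ∑ i ∈ s, X i ^ k

/-- generating polynomial -/
noncomputable def GP (s : Finset σ) : Polynomial (MvPolynomial σ R) :=
  ∏ i ∈ s, (1 + Polynomial.C (X i) * Polynomial.X + Polynomial.C (X i) ^ 2 * Polynomial.X ^ 2)

lemma key_coeff (y : MvPolynomial σ R) (q : Polynomial (MvPolynomial σ R)) (n : ℕ) :
    ((1 + Polynomial.C y * Polynomial.X + Polynomial.C y ^ 2 * Polynomial.X ^ 2) * q).coeff n =
      q.coeff n + y * (if 1 ≤ n then q.coeff (n - 1) else 0) +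
        y ^ 2 * (if 2 ≤ n then q.coeff (n - 2) else 0) := by
  have h : (1 + Polynomial.C y * Polynomial.X + Polynomial.C y ^ 2 * Polynomial.X ^ 2) * q =
      q + (q * Polynomial.C y) * Polynomial.X ^ 1 + (q * Polynomial.C (y ^ 2)) * Polynomial.X ^ 2 := by
    rw [map_pow]; ring
  rw [h, Polynomial.coeff_add, Polynomial.coeff_add, Polynomial.coeff_mul_X_pow',
    Polynomial.coeff_mul_X_pow']
  simp only [Polynomial.coeff_mul_C]
  split_ifs with h1 h2 <;> ring

lemma coeffs (s : Finset σ) :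
    (GP (R := R) s).coeff 0 = 1 ∧
    (GP (R := R) s).coeff 1 = PS s 1 ∧
    2 * (GP (R := R) s).coeff 2 = PS s 1 ^ 2 + PS s 2 ∧
    6 * (GP (R := R) s).coeff 3 = PS s 1 ^ 3 + 3 * (PS s 1 * PS s 2) - 4 * PS s 3 ∧
    24 * (GP (R := R) s).coeff 4 = PS s 1 ^ 4 + 6 * (PS s 1 ^ 2 * PS s 2) + 3 * PS s 2 ^ 2
      - 16 * (PS s 1 * PS s 3) + 6 * PS s 4 ∧
    120 * (GP (R := R) s).coeff 5 = PS s 1 ^ 5 + 10 * (PS s 1 ^ 3 * PS s 2)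
      + 15 * (PS s 1 * PS s 2 ^ 2) - 40 * (PS s 1 ^ 2 * PS s 3) - 40 * (PS s 2 * PS s 3)
      + 30 * (PS s 1 * PS s 4) + 24 * PS s 5 := by
  induction s using Finset.induction with
  | empty => simp [GP, PS, Polynomial.coeff_one]
  | @insert a s ha ih =>
    obtain ⟨h0, h1, h2, h3, h4, h5⟩ := ih
    have hG : GP (R := R) (insert a s) =
        (1 + Polynomial.C (X a) * Polynomial.X + Polynomial.C (X a) ^ 2 * Polynomial.X ^ 2) *
          GP (R := R) s := by
      rw [GP, Finset.prod_insert ha]; rfl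
    have hP : ∀ k, PS (R := R) (insert a s) k = X a ^ k + PS s k :=
      fun k => Finset.sum_insert ha
    refine ⟨?_, ?_, ?_, ?_, ?_, ?_⟩
    · rw [hG, key_coeff]; norm_num [h0]
    · rw [hG, key_coeff, hP 1]; norm_num
      linear_combination h1 + X a * h0
    · rw [hG, key_coeff, hP 1, hP 2]; norm_num
      linear_combination h2 + 2 * X a * h1 + 2 * (X a) ^ 2 * h0
    · rw [hG, key_coeff, hP 1, hP 2, hP 3]; norm_num
      linear_combination h3 + 3 * X a * h2 + 6 * (X a) ^ 2 * h1
    · rw [hG, key_coeff, hP 1, hP 2, hP 3, hP 4]; norm_num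
      linear_combination h4 + 4 * X a * h3 + 12 * (X a) ^ 2 * h2
    · rw [hG, key_coeff, hP 1, hP 2, hP 3, hP 4, hP 5]; norm_num
      linear_combination h5 + 5 * X a * h4 + 20 * (X a) ^ 2 * h3

lemma gp_coeff5 :
    (GP (R := R) (Finset.univ : Finset σ)).coeff 5 =
      ∑ c ∈ (Fintype.piFinset fun _ : σ => Finset.range 3).filter (fun c => ∑ i, c i = 5),
        ∏ i, X i ^ c i := by
  have hGP : GP (R := R) (Finset.univ : Finset σ) =
      ∑ c ∈ Fintype.piFinset (fun _ : σ => Finset.range 3),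
        Polynomial.C (∏ i, X i ^ c i) * Polynomial.X ^ (∑ i, c i) := by
    rw [GP]
    have hfac : ∀ i : σ,
        (1 + Polynomial.C (X i) * Polynomial.X + Polynomial.C (X i) ^ 2 * Polynomial.X ^ 2 :
          Polynomial (MvPolynomial σ R)) =
        ∑ j ∈ Finset.range 3, (Polynomial.C (X i)) ^ j * Polynomial.X ^ j := by
      intro i
      rw [Finset.sum_range_succ, Finset.sum_range_succ, Finset.sum_range_one]
      ring
    simp_rw [hfac]
    rw [Finset.prod_univ_sum]
    refine Finset.sum_congr rfl fun c _ => ?_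
    rw [Finset.prod_mul_distrib, Finset.prod_pow_eq_pow_sum]
    congr 1
    rw [map_prod]
    simp [map_pow]
  rw [hGP, Polynomial.finset_sum_coeff]
  simp_rw [Polynomial.coeff_C_mul, Polynomial.coeff_X_pow]
  rw [Finset.sum_filter]
  refine Finset.sum_congr rfl fun c _ => ?_
  by_cases h : ∑ i, c i = 5 <;> simp [h, eq_comm]

lemma card_multiset_sum (s : Finset σ) (f : σ → Multiset σ) :
    Multiset.card (∑ k ∈ s, f k) = ∑ k ∈ s, Multiset.card (f k) := by
  induction s using Finset.induction with
  | empty => simp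
  | @insert a s ha ih => simp [Finset.sum_insert ha, ih]

lemma sum_count_eq (m : Multiset σ) : ∑ k ∈ Finset.univ, Multiset.count k m = Multiset.card m := by
  rw [← Multiset.toFinset_sum_count_eq]
  exact (Finset.sum_subset (Finset.subset_univ _)
    (fun x _ hx => Multiset.count_eq_zero.2 (by simpa using hx))).symm

lemma step2_lemma :
    ∑ s ∈ (Finset.univ : Finset (Sym σ 5)).filter (fun s => ∀ i, Multiset.count i s.1 ≤ 2),
        (Multiset.map X s.1).prod =
      ∑ c ∈ (Fintype.piFinset fun _ : σ => Finset.range 3).filter (fun c => ∑ i, c i = 5),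
        ∏ i, (X i : MvPolynomial σ R) ^ c i := by
  refine Finset.sum_bij' (fun s _ => fun k => Multiset.count k s.1)
    (fun c hc => (⟨∑ k ∈ Finset.univ, Multiset.replicate (c k) k, ?_⟩ : Sym σ 5))
    ?_ ?_ ?_ ?_ ?_
  · rw [card_multiset_sum]
    simp only [Multiset.card_replicate]
    exact (Finset.mem_filter.1 hc).2
  · intro s hs
    rw [Finset.mem_filter] at hs ⊢
    refine ⟨Fintype.mem_piFinset.2 fun k => ?_, ?_⟩
    · exact Finset.mem_range.2 (Nat.lt_succ_of_le (hs.2 k))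
    · rw [sum_count_eq]; exact s.2
  · intro c hc
    apply Finset.mem_filter.2
    rw [Finset.mem_filter] at hc
    refine ⟨Finset.mem_univ _, fun i => ?_⟩
    show Multiset.count i (∑ k ∈ Finset.univ, Multiset.replicate (c k) k) ≤ 2
    rw [Multiset.count_sum']
    simp only [Multiset.count_replicate]
    rw [Finset.sum_ite_eq']
    have hlt := Fintype.mem_piFinset.1 hc.1 i
    simp only [Finset.mem_range] at hlt
    simp only [Finset.mem_univ, if_true]
    omega
  · intro s _
    apply Subtype.ext
    show (∑ k ∈ Finset.univ, Multiset.replicate (Multiset.count k s.1) k) = s.1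
    rw [Multiset.ext]
    intro y
    rw [Multiset.count_sum']
    simp only [Multiset.count_replicate]
    rw [Finset.sum_ite_eq']
    simp
  · intro c _
    funext k
    show Multiset.count k (∑ j ∈ Finset.univ, Multiset.replicate (c j) j) = c k
    rw [Multiset.count_sum']
    simp only [Multiset.count_replicate]
    rw [Finset.sum_ite_eq']
    simp
  · intro s _
    rw [Finset.prod_multiset_map_count]
    refine Finset.prod_subset (Finset.subset_univ _) (fun x _ hx => ?_)
    have h0 : Multiset.count x s.1 = 0 :=
      Multiset.count_eq_zero.2 (fun h => hx (Multiset.mem_toFinset.2 h))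
    rw [h0, pow_zero]

end Aux

/-- Canonical partition function Z_2(β,5): ideal Gentile gas, N = 5 particles, maximum occupation number q = 2, expressed through the power sums
`p_k = Z(kβ)`: sum of monomial symmetric polynomials over the partitions listed. -/
theorem gentile_stmt_10 (σ : Type*) [Fintype σ] [DecidableEq σ]
    (R : Type*) [CommRing R] [Algebra ℚ R] :
    msymm σ R (part 5 {2,2,1}) + msymm σ R (part 5 {2,1,1,1}) + msymm σ R (part 5 {1,1,1,1,1}) =
      (1/120 : ℚ) • psum σ R 1 ^ 5 + (1/12 : ℚ) • (psum σ R 1 ^ 3 * psum σ R 2) + (1/8 : ℚ) • (psum σ R 1 * psum σ R 2 ^ 2) - (1/3 : ℚ) • (psum σ R 1 ^ 2 * psum σ R 3) - (1/3 : ℚ) • (psum σ R 2 * psum σ R 3) + (1/4 : ℚ) • (psum σ R 1 * psum σ R 4) + (1/5 : ℚ) • psum σ R 5 := by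
  classical
  have e1 : msymm σ R (part 5 {2,2,1}) = ∑ a ∈ Finset.univ.filter
      (fun a : Sym σ 5 => Nat.Partition.ofSym a = part 5 {2,2,1}), (Multiset.map X a.1).prod := by
    rw [msymm]
    exact (Finset.sum_subtype _ (by simp)
      (fun a : Sym σ 5 => (Multiset.map X a.1).prod)).symm
  have e2 : msymm σ R (part 5 {2,1,1,1}) = ∑ a ∈ Finset.univ.filter
      (fun a : Sym σ 5 => Nat.Partition.ofSym a = part 5 {2,1,1,1}), (Multiset.map X a.1).prod := by
    rw [msymm]
    exact (Finset.sum_subtype _ (by simp)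
      (fun a : Sym σ 5 => (Multiset.map X a.1).prod)).symm
  have e3 : msymm σ R (part 5 {1,1,1,1,1}) = ∑ a ∈ Finset.univ.filter
      (fun a : Sym σ 5 => Nat.Partition.ofSym a = part 5 {1,1,1,1,1}), (Multiset.map X a.1).prod := by
    rw [msymm]
    exact (Finset.sum_subtype _ (by simp)
      (fun a : Sym σ 5 => (Multiset.map X a.1).prod)).symm
  have step1 : msymm σ R (part 5 {2,2,1}) + msymm σ R (part 5 {2,1,1,1}) +
      msymm σ R (part 5 {1,1,1,1,1}) =
      ∑ s ∈ (Finset.univ : Finset (Sym σ 5)).filter (fun s => ∀ i, Multiset.count i s.1 ≤ 2),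
        (Multiset.map X s.1).prod := by
    rw [e1, e2, e3]
    rw [Finset.sum_filter, Finset.sum_filter, Finset.sum_filter, Finset.sum_filter,
      ← Finset.sum_add_distrib, ← Finset.sum_add_distrib]
    refine Finset.sum_congr rfl fun s _ => ?_
    have hiff := ofSym_iff s
    have d12 : (part 5 {2,2,1}) ≠ (part 5 {2,1,1,1}) := by
      intro h
      have hh : ({2,2,1} : Multiset ℕ) = {2,1,1,1} := congrArg Nat.Partition.parts h
      exact absurd hh (by decide)
    have d13 : (part 5 {2,2,1}) ≠ (part 5 {1,1,1,1,1}) := by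
      intro h
      have hh : ({2,2,1} : Multiset ℕ) = {1,1,1,1,1} := congrArg Nat.Partition.parts h
      exact absurd hh (by decide)
    have d23 : (part 5 {2,1,1,1}) ≠ (part 5 {1,1,1,1,1}) := by
      intro h
      have hh : ({2,1,1,1} : Multiset ℕ) = {1,1,1,1,1} := congrArg Nat.Partition.parts h
      exact absurd hh (by decide)
    by_cases hc : ∀ i, Multiset.count i s.1 ≤ 2
    · rw [if_pos hc]
      rcases hiff.2 hc with h | h | h
      · rw [if_pos h, if_neg (fun he => d12 (h.symm.trans he)),
          if_neg (fun he => d13 (h.symm.trans he))]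
        ring
      · rw [if_pos h, if_neg (fun he => d12 (he.symm.trans h)),
          if_neg (fun he => d23 (h.symm.trans he))]
        ring
      · rw [if_pos h, if_neg (fun he => d13 (he.symm.trans h)),
          if_neg (fun he => d23 (he.symm.trans h))]
        ring
    · have h1 : ¬ (Nat.Partition.ofSym s = part 5 {2,2,1}) :=
        fun h => hc (hiff.1 (Or.inl h))
      have h2 : ¬ (Nat.Partition.ofSym s = part 5 {2,1,1,1}) :=
        fun h => hc (hiff.1 (Or.inr (Or.inl h)))
      have h3 : ¬ (Nat.Partition.ofSym s = part 5 {1,1,1,1,1}) :=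
        fun h => hc (hiff.1 (Or.inr (Or.inr h)))
      rw [if_neg h1, if_neg h2, if_neg h3, if_neg hc]
      ring
  have key5 := (coeffs (σ := σ) (R := R) Finset.univ).2.2.2.2.2
  have hPS : ∀ k, PS (R := R) (Finset.univ : Finset σ) k = psum σ R k := fun k => rfl
  simp only [hPS] at key5
  have hmain : msymm σ R (part 5 {2,2,1}) + msymm σ R (part 5 {2,1,1,1}) +
      msymm σ R (part 5 {1,1,1,1,1}) = (GP (R := R) (Finset.univ : Finset σ)).coeff 5 := by
    rw [step1, step2_lemma, gp_coeff5]
  have h120 : ∀ x y : MvPolynomial σ R, (120:ℚ) • x = (120:ℚ) • y → x = y := by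
    intro x y h
    have h' := congrArg (fun z => (120:ℚ)⁻¹ • z) h
    simpa [smul_smul] using h'
  apply h120
  rw [hmain]
  simp only [smul_add, smul_sub, smul_smul]
  norm_num [-MvPolynomial.psum_one]
  simp only [Algebra.smul_def, map_ofNat, map_one]
  linear_combination key5
end
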